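/- For every real c > 0 and every real k with 1/2 < k ≤ 1, there exists a constant C > 0 such that for all natural numbers N ≥ 1, ∑_{i=0}^{N} [ |1/2 − i/N| < c·N^{−k} ] · C(N, i) / 2^N ≤ C · N^{1/2 − k}, where [·] equals 1 when the condition holds and 0 otherwise, C(N, i) denotes the binomial coefficient, and N^{−k}, N^{1/2−k} are real powers of N. -/

import Mathlib

open scoped BigOperators


lemma cB_sq (m : ℕ) : (Nat.centralBinom m)^2 * (2*m+1) ≤ 16^m := by
  induction m with
  | zero => simp [Nat.centralBinom]
  | succ n ih =>
    have key := Nat.succ_mul_centralBinom_succ n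
    have h1 : (n+1)^2 * ((Nat.centralBinom (n+1))^2 * (2*(n+1)+1))
        ≤ (n+1)^2 * 16^(n+1) := by
      have e : (n+1)^2 * ((Nat.centralBinom (n+1))^2 * (2*(n+1)+1))
          = (2*(2*n+1))^2 * (Nat.centralBinom n)^2 * (2*n+3) := by
        have : ((n+1) * Nat.centralBinom (n+1))^2 = (2*(2*n+1) * Nat.centralBinom n)^2 := by
          rw [key]
        ring_nf
        ring_nf at this
        nlinarith [this]
      rw [e]
      have h2 : (2*(2*n+1))^2 * (Nat.centralBinom n)^2 * (2*n+3)
          = 4*(2*n+1)*(2*n+3) * ((Nat.centralBinom n)^2 * (2*n+1)) := by ring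
      rw [h2]
      calc 4*(2*n+1)*(2*n+3) * ((Nat.centralBinom n)^2 * (2*n+1))
          ≤ 4*(2*n+1)*(2*n+3) * 16^n := Nat.mul_le_mul_left _ ih
        _ ≤ (n+1)^2 * 16^(n+1) := by
            have : 4*(2*n+1)*(2*n+3) ≤ 16*(n+1)^2 := by nlinarith
            calc 4*(2*n+1)*(2*n+3) * 16^n ≤ 16*(n+1)^2 * 16^n :=
                Nat.mul_le_mul_right _ this
              _ = (n+1)^2 * 16^(n+1) := by ring
    exact Nat.le_of_mul_le_mul_left h1 (by positivity)

lemma sq_choose_le (N i : ℕ) : (N.choose i)^2 * N ≤ 4^N := by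
  rcases Nat.even_or_odd N with ⟨m, hm⟩ | ⟨m, hm⟩
  · subst hm
    have h1 : (m+m).choose i ≤ Nat.centralBinom m := by
      have := Nat.choose_le_centralBinom i m
      simpa [two_mul] using this
    calc ((m+m).choose i)^2 * (m+m) ≤ (Nat.centralBinom m)^2 * (2*m+1) := by
          apply Nat.mul_le_mul (Nat.pow_le_pow_left h1 2) (by omega)
      _ ≤ 16^m := cB_sq m
      _ = 4^(m+m) := by rw [show (16:ℕ) = 4^2 from rfl, ← pow_mul]; ring_nf
  · subst hm
    have hmid : (2*m+1).choose i ≤ (2*m+1).choose m := by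
      have := Nat.choose_le_middle i (2*m+1)
      simpa [Nat.mul_add_div, show (2*m+1)/2 = m by omega] using this
    have hdouble : 2 * (2*m+1).choose m = Nat.centralBinom (m+1) := by
      have hsym : (2*m+1).choose (m+1) = (2*m+1).choose m := by
        rw [← Nat.choose_symm (by omega : m+1 ≤ 2*m+1)]
        congr 1; omega
      rw [Nat.centralBinom]
      have : 2*(m+1) = (2*m+1) + 1 := by ring
      rw [this]
      rw [show (2*m+1+1).choose (m+1) = (2*m+1).choose m + (2*m+1).choose (m+1) from
        Nat.choose_succ_succ (2*m+1) m]
      omega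
    have h4 : 4 * ((2*m+1).choose m)^2 * (2*(m+1)+1) ≤ 16^(m+1) := by
      have := cB_sq (m+1)
      rw [← hdouble] at this
      calc 4 * ((2*m+1).choose m)^2 * (2*(m+1)+1)
          = (2 * (2*m+1).choose m)^2 * (2*(m+1)+1) := by ring
        _ ≤ 16^(m+1) := this
    calc ((2*m+1).choose i)^2 * (2*m+1) ≤ ((2*m+1).choose m)^2 * (2*(m+1)+1) := by
          apply Nat.mul_le_mul (Nat.pow_le_pow_left hmid 2) (by omega)
      _ ≤ 4^(2*m+1) := by
          have h16 : (16:ℕ)^(m+1) = 4 * 4^(2*m+1) := by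
            rw [show (16:ℕ) = 4^2 from rfl, ← pow_mul]
            rw [show 4^(2*(m+1)) = 4^(2*m+1+1) from by ring_nf, pow_succ]
            ring
          rw [h16] at h4
          have := Nat.le_of_mul_le_mul_left (by linarith [h4] : 4 * (((2*m+1).choose m)^2 * (2*(m+1)+1)) ≤ 4 * 4^(2*m+1)) (by norm_num)
          omega


lemma choose_div_le (N i : ℕ) (hN : 1 ≤ N) :
    (N.choose i : ℝ) / 2^N ≤ (N:ℝ) ^ (-(1/2) : ℝ) := by
  have hNpos : (0:ℝ) < N := by exact_mod_cast hN
  rw [div_le_iff₀ (by positivity)]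
  have hb : (0:ℝ) ≤ (N:ℝ)^(-(1/2):ℝ) * 2^N := by positivity
  have hsq : ((N.choose i : ℝ))^2 ≤ ((N:ℝ)^(-(1/2):ℝ) * 2^N)^2 := by
    have hnat : ((N.choose i)^2 * N : ℕ) ≤ (4^N : ℕ) := sq_choose_le N i
    have hr : ((N.choose i : ℝ))^2 * N ≤ 4^N := by exact_mod_cast hnat
    have hrw : ((N:ℝ)^(-(1/2):ℝ) * 2^N)^2 = (N:ℝ)⁻¹ * 4^N := by
      rw [mul_pow, ← Real.rpow_natCast ((N:ℝ)^(-(1/2):ℝ)) 2,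
        ← Real.rpow_mul (le_of_lt hNpos)]
      norm_num
      rw [Real.rpow_neg_one]
      congr 1
      rw [← pow_mul, mul_comm, pow_mul]; norm_num
    rw [hrw, le_inv_mul_iff₀ hNpos]
    linarith
  exact (pow_le_pow_iff_left₀ (Nat.cast_nonneg _) hb two_ne_zero).mp hsq

/-- Optimality of the `O(1/√N)` generalization gap: for `1/2 < k ≤ 1`, the probability
that the empirical error of a random-label classifier deviates from its population error
`1/2` by less than `c·N^{−k}` is `O(N^{1/2−k})`. -/
theorem prob_small_gap_bigO (c k : ℝ) (hc : 0 < c) (hk1 : 1 / 2 < k) (hk2 : k ≤ 1) :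
    ∃ C : ℝ, 0 < C ∧ ∀ N : ℕ, 1 ≤ N →
      ∑ i ∈ Finset.range (N + 1),
        (if |1 / 2 - (i : ℝ) / N| < c * (N : ℝ) ^ (-k) then (N.choose i : ℝ) else 0)
          / 2 ^ N
      ≤ C * (N : ℝ) ^ (1 / 2 - k : ℝ) := by
  refine ⟨2 * c + 1, by linarith, fun N hN => ?_⟩
  have hNpos : (0:ℝ) < N := by exact_mod_cast hN
  set t : ℝ := c * (N:ℝ) ^ (1 - k : ℝ) with ht
  have htpos : 0 < t := by positivity
  set S : Finset ℕ := (Finset.range (N+1)).filter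
    (fun i => |1 / 2 - (i : ℝ) / N| < c * (N : ℝ) ^ (-k)) with hS
  -- rewrite sum as sum over S
  have hsum : ∑ i ∈ Finset.range (N + 1),
      (if |1 / 2 - (i : ℝ) / N| < c * (N : ℝ) ^ (-k) then (N.choose i : ℝ) else 0) / 2 ^ N
      = ∑ i ∈ S, (N.choose i : ℝ) / 2 ^ N := by
    rw [hS, Finset.sum_filter]
    apply Finset.sum_congr rfl
    intro i _
    split <;> simp
  rw [hsum]
  -- key fact: N * N^(-k) = N^(1-k)
  have hNt : (N:ℝ) * (N:ℝ)^(-k) = (N:ℝ)^(1-k:ℝ) := by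
    nth_rewrite 1 [show (N:ℝ) = (N:ℝ)^(1:ℝ) from (Real.rpow_one _).symm]
    rw [← Real.rpow_add hNpos]
    ring_nf
  -- each element of S lies in a window of width 2t
  have hmem : ∀ i ∈ S, (N:ℝ)/2 - t < i ∧ (i:ℝ) < (N:ℝ)/2 + t := by
    intro i hi
    rw [hS, Finset.mem_filter] at hi
    have habs := abs_lt.mp hi.2
    have hexp : (1/2 - (i:ℝ)/N) * N = N/2 - i := by field_simp
    have hct : c * (N:ℝ)^(-k) * N = t := by rw [ht, ← hNt]; ring
    have h1 := mul_lt_mul_of_pos_right habs.2 hNpos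
    have h2 := mul_lt_mul_of_pos_right habs.1 hNpos
    rw [hexp, hct] at h1
    rw [hexp] at h2
    constructor
    · nlinarith
    · nlinarith
  -- card bound
  have hcard : (S.card : ℝ) ≤ 2 * t + 1 := by
    rcases S.eq_empty_or_nonempty with h | h
    · rw [h]; simp; positivity
    · have hmin := S.min'_mem h
      have hmax := S.max'_mem h
      have h1 := hmem _ hmin
      have h2 := hmem _ hmax
      have hsub : S ⊆ Finset.Icc (S.min' h) (S.max' h) := by
        intro x hx
        rw [Finset.mem_Icc]
        exact ⟨S.min'_le x hx, S.le_max' x hx⟩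
      have hle : S.card ≤ S.max' h + 1 - S.min' h := by
        calc S.card ≤ (Finset.Icc (S.min' h) (S.max' h)).card := Finset.card_le_card hsub
          _ = S.max' h + 1 - S.min' h := Nat.card_Icc _ _
      have hmm : S.min' h ≤ S.max' h := S.min'_le _ hmax
      have : (S.card : ℝ) ≤ (S.max' h : ℝ) - (S.min' h : ℝ) + 1 := by
        have := hle
        have h3 : (S.card : ℝ) ≤ ((S.max' h + 1 - S.min' h : ℕ) : ℝ) := by exact_mod_cast hle
        rw [Nat.cast_sub (by omega)] at h3
        push_cast at h3
        linarith
      linarith [h1.1, h2.2]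
  -- sum over S
  have hterm : ∀ i ∈ S, (N.choose i : ℝ) / 2 ^ N ≤ (N:ℝ) ^ (-(1/2):ℝ) :=
    fun i _ => choose_div_le N i hN
  have hsum2 : ∑ i ∈ S, (N.choose i : ℝ) / 2 ^ N ≤ (S.card : ℝ) * (N:ℝ) ^ (-(1/2):ℝ) := by
    calc ∑ i ∈ S, (N.choose i : ℝ) / 2 ^ N ≤ ∑ _i ∈ S, (N:ℝ) ^ (-(1/2):ℝ) :=
        Finset.sum_le_sum hterm
      _ = (S.card : ℝ) * (N:ℝ) ^ (-(1/2):ℝ) := by rw [Finset.sum_const, nsmul_eq_mul]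
  have hrpow_pos : (0:ℝ) < (N:ℝ) ^ (-(1/2):ℝ) := by positivity
  have hfinal : (S.card : ℝ) * (N:ℝ) ^ (-(1/2):ℝ) ≤ (2*c+1) * (N:ℝ) ^ (1/2 - k : ℝ) := by
    calc (S.card : ℝ) * (N:ℝ) ^ (-(1/2):ℝ) ≤ (2*t+1) * (N:ℝ) ^ (-(1/2):ℝ) := by
          apply mul_le_mul_of_nonneg_right hcard (le_of_lt hrpow_pos)
      _ = 2*c * ((N:ℝ)^(1-k:ℝ) * (N:ℝ)^(-(1/2):ℝ)) + (N:ℝ)^(-(1/2):ℝ) := by rw [ht]; ring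
      _ ≤ (2*c+1) * (N:ℝ) ^ (1/2 - k : ℝ) := by
          have e1 : (N:ℝ)^(1-k:ℝ) * (N:ℝ)^(-(1/2):ℝ) = (N:ℝ)^(1/2-k:ℝ) := by
            rw [← Real.rpow_add hNpos]; ring_nf
          have e2 : (N:ℝ)^(-(1/2):ℝ) ≤ (N:ℝ)^(1/2-k:ℝ) := by
            apply Real.rpow_le_rpow_of_exponent_le (by exact_mod_cast hN)
            linarith
          rw [e1]
          nlinarith [Real.rpow_pos_of_pos hNpos (1/2-k:ℝ)]
  linarith
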